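/- arXiv:1207.3967 — 2 statements merged into one kernel-verified Lean document; each statement's English description precedes it below -/
import Mathlib

section
/- The function f(t) = t²/(1 − log t), defined for t ∈ (0, e), is convex, positive, and satisfies lim_{t→0+} f(t) = 0. -/
open Filter Set Real

lemma log_lt_one_aux {t : ℝ} (ht : 0 < t) (hte : t < Real.exp 1) : Real.log t < 1 := by
  calc Real.log t < Real.log (Real.exp 1) := Real.log_lt_log ht hte
  _ = 1 := Real.log_exp 1

lemma hd1 {t : ℝ} (ht : 0 < t) (hte : t < Real.exp 1) :
    HasDerivAt (fun t : ℝ => t ^ 2 / (1 - Real.log t))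
      (t * (3 - 2 * Real.log t) / (1 - Real.log t) ^ 2) t := by
  have hg : (0:ℝ) < 1 - Real.log t := by linarith [log_lt_one_aux ht hte]
  have h := (hasDerivAt_pow 2 t).div
    ((hasDerivAt_const t (1:ℝ)).sub (Real.hasDerivAt_log ht.ne')) hg.ne'
  refine h.congr_deriv ?_
  simp only [Pi.sub_apply]
  field_simp
  ring

lemma hd2 {t : ℝ} (ht : 0 < t) (hte : t < Real.exp 1) :
    HasDerivAt (fun t : ℝ => t * (3 - 2 * Real.log t) / (1 - Real.log t) ^ 2)
      ((2 * (1 - Real.log t) ^ 2 + 3 * (1 - Real.log t) + 2) / (1 - Real.log t) ^ 3) t := by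
  have hg : (0:ℝ) < 1 - Real.log t := by linarith [log_lt_one_aux ht hte]
  have hu : HasDerivAt (fun t : ℝ => t * (3 - 2 * Real.log t)) (1 - 2 * Real.log t) t := by
    have := (hasDerivAt_id t).mul
      ((hasDerivAt_const t (3:ℝ)).sub ((Real.hasDerivAt_log ht.ne').const_mul 2))
    refine this.congr_deriv ?_
    simp only [Pi.sub_apply, id]
    field_simp
    ring
  have hv : HasDerivAt (fun t : ℝ => (1 - Real.log t) ^ 2)
      (2 * (1 - Real.log t) * (-t⁻¹)) t := by
    have := ((hasDerivAt_const t (1:ℝ)).sub (Real.hasDerivAt_log ht.ne')).pow 2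
    refine this.congr_deriv ?_
    simp only [Pi.sub_apply]
    ring
  have h := hu.div hv (by positivity)
  refine h.congr_deriv ?_
  field_simp
  ring

/-- The function `f(t) = t² / (1 - log t)` is convex and positive on `(0, e)`,
and `f(t) → 0` as `t → 0+`. -/
theorem stmt_4 :
    ConvexOn ℝ (Set.Ioo 0 (Real.exp 1)) (fun t : ℝ => t ^ 2 / (1 - Real.log t)) ∧
    (∀ t ∈ Set.Ioo (0:ℝ) (Real.exp 1), 0 < t ^ 2 / (1 - Real.log t)) ∧
    Tendsto (fun t : ℝ => t ^ 2 / (1 - Real.log t)) (nhdsWithin 0 (Set.Ioi 0)) (nhds 0) := by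
  refine ⟨?_, ?_, ?_⟩
  · apply convexOn_of_hasDerivWithinAt2_nonneg (convex_Ioo _ _)
      (f' := fun t : ℝ => t * (3 - 2 * Real.log t) / (1 - Real.log t) ^ 2)
      (f'' := fun t : ℝ =>
        (2 * (1 - Real.log t) ^ 2 + 3 * (1 - Real.log t) + 2) / (1 - Real.log t) ^ 3)
    · intro x hx
      exact (hd1 hx.1 hx.2).continuousAt.continuousWithinAt
    · intro x hx
      rw [interior_Ioo] at hx
      exact (hd1 hx.1 hx.2).hasDerivWithinAt
    · intro x hx
      rw [interior_Ioo] at hx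
      exact (hd2 hx.1 hx.2).hasDerivWithinAt
    · intro x hx
      rw [interior_Ioo] at hx
      have hg : (0:ℝ) < 1 - Real.log x := by linarith [log_lt_one_aux hx.1 hx.2]
      positivity
  · intro t ht
    have hg : (0:ℝ) < 1 - Real.log t := by linarith [log_lt_one_aux ht.1 ht.2]
    exact div_pos (pow_pos ht.1 2) hg
  · have h1 : Tendsto (fun t : ℝ => t ^ 2) (nhdsWithin 0 (Set.Ioi 0)) (nhds 0) := by
      have : Tendsto (fun t : ℝ => t ^ 2) (nhds 0) (nhds 0) := by
        simpa using (continuous_pow 2).tendsto (0:ℝ)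
      exact this.mono_left nhdsWithin_le_nhds
    have h2 : Tendsto (fun t : ℝ => (1 - Real.log t)⁻¹) (nhdsWithin 0 (Set.Ioi 0)) (nhds 0) := by
      apply Tendsto.inv_tendsto_atTop
      have : Tendsto Real.log (nhdsWithin 0 (Set.Ioi 0)) atBot :=
        Real.tendsto_log_nhdsGT_zero
      have h3 : Tendsto (fun t : ℝ => 1 + -Real.log t) (nhdsWithin 0 (Set.Ioi 0)) atTop :=
        tendsto_atTop_add_const_left _ 1 (tendsto_neg_atBot_atTop.comp this)
      simpa [sub_eq_add_neg] using h3
    have := h1.mul h2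
    simpa [div_eq_mul_inv] using this
end

section
/- Let M be an Orlicz function with M(1)=1, let 1 ≤ q < p, and suppose there is C ∈ (0,1] with M(λt) ≥ C·M(λ)·t^q for all λ > 0 and t ∈ (0,1]. Define a_n = 2^{n+2} M(2^{−(n+1)})^{1/p} for n ∈ ℤ, let f_n : ℝ → [0,∞) be the tent function with f_n(t) = a_n t on [0, 2^{−n}], f_n(t) = −a_n(t − 2^{−(n−1)}) on (2^{−n}, 2^{−(n−1)}], and f_n = 0 elsewhere, and set f_{n,k}(t) = f_n(t − (k−1)/2^{n+1}) for k ∈ ℤ. Then there is a constant A ≥ 1 (one may take A = 8·4^p(1 + C⁻¹/(1 − 2^{1−p/q}))) such that for all s, t ∈ ℝ: M(|s−t|) ≤ ∑_{n,k ∈ ℤ} |f_{n,k}(s) − f_{n,k}(t)|^p ≤ A·M(|s−t|). -/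
open Filter Set Real

/-- The coefficient `a_n = 2^{n+2} M(2^{-(n+1)})^{1/p}`. -/
noncomputable def tentCoeff (M : ℝ → ℝ) (p : ℝ) (n : ℤ) : ℝ :=
  (2:ℝ) ^ (n + 2) * (M ((2:ℝ) ^ (-(n + 1)))) ^ (1 / p)

/-- The tent function `f_n` of slope `a`, supported on `[0, 2^{-(n-1)}]`. -/
noncomputable def tent (a : ℝ) (n : ℤ) (t : ℝ) : ℝ :=
  if t ∈ Set.Icc (0:ℝ) ((2:ℝ) ^ (-n)) then a * t
  else if t ∈ Set.Ioc ((2:ℝ) ^ (-n)) ((2:ℝ) ^ (-(n - 1))) then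
    -a * (t - (2:ℝ) ^ (-(n - 1)))
  else 0

/-- The translated tent function `f_{n,k}(t) = f_n(t - (k-1)/2^{n+1})`. -/
noncomputable def tentNK (M : ℝ → ℝ) (p : ℝ) (n k : ℤ) (t : ℝ) : ℝ :=
  tent (tentCoeff M p n) n (t - ((k:ℝ) - 1) / (2:ℝ) ^ (n + 1))

lemma tent_eq (a : ℝ) (n : ℤ) (t : ℝ) :
    tent a n t = a * max 0 (min t ((2:ℝ) ^ (-(n-1)) - t)) := by
  have h2 : (2:ℝ) ^ (-(n-1)) = 2 * 2 ^ (-n) := by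
    rw [show -(n-1) = 1 + (-n) by ring, zpow_add₀ (two_ne_zero : (2:ℝ) ≠ 0), zpow_one]
  have hpos : (0:ℝ) < 2 ^ (-n) := zpow_pos two_pos _
  unfold tent
  simp only [Set.mem_Icc, Set.mem_Ioc]
  split_ifs with H1 H2
  · rw [min_eq_left (by rw [h2]; linarith [H1.1, H1.2]), max_eq_right H1.1]
  · rw [min_eq_right (by rw [h2]; linarith [H2.1, H2.2]), max_eq_right (by linarith [H2.2])]
    ring
  · push_neg at H1 H2
    have hmax : max 0 (min t ((2:ℝ) ^ (-(n-1)) - t)) = 0 := by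
      rcases le_or_gt 0 t with h | h
      · have h4 := H2 (H1 h)
        exact max_eq_left (by linarith [min_le_right t ((2:ℝ) ^ (-(n-1)) - t)])
      · exact max_eq_left (by linarith [min_le_left t ((2:ℝ) ^ (-(n-1)) - t)])
    rw [hmax, mul_zero]

lemma tent_nonneg {a : ℝ} (ha : 0 ≤ a) (n : ℤ) (t : ℝ) : 0 ≤ tent a n t := by
  rw [tent_eq]; exact mul_nonneg ha (le_max_left _ _)

lemma tent_le {a : ℝ} (ha : 0 ≤ a) (n : ℤ) (t : ℝ) : tent a n t ≤ a * 2 ^ (-n) := by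
  rw [tent_eq]
  have h2 : (2:ℝ) ^ (-(n-1)) = 2 * 2 ^ (-n) := by
    rw [show -(n-1) = 1 + (-n) by ring, zpow_add₀ (two_ne_zero : (2:ℝ) ≠ 0), zpow_one]
  have hpos : (0:ℝ) < 2 ^ (-n) := zpow_pos two_pos _
  refine mul_le_mul_of_nonneg_left ?_ ha
  refine max_le hpos.le ?_
  rcases le_total t ((2:ℝ) ^ (-(n-1)) - t) with h | h
  · rw [min_eq_left h]; rw [h2] at h; linarith
  · rw [min_eq_right h]; rw [h2] at h ⊢; linarith

lemma tent_lipschitz {a : ℝ} (ha : 0 ≤ a) (n : ℤ) (x y : ℝ) :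
    |tent a n x - tent a n y| ≤ a * |x - y| := by
  rw [tent_eq, tent_eq, ← mul_sub, abs_mul, abs_of_nonneg ha]
  refine mul_le_mul_of_nonneg_left ?_ ha
  set c := (2:ℝ) ^ (-(n-1))
  calc |max 0 (min x (c - x)) - max 0 (min y (c - y))|
      ≤ max |(0:ℝ) - 0| |min x (c-x) - min y (c-y)| := abs_max_sub_max_le_max _ _ _ _
    _ ≤ |x - y| := by
        refine max_le (by simp) ?_
        refine (abs_min_sub_min_le_max _ _ _ _).trans (max_le le_rfl ?_)
        rw [show c - x - (c - y) = -(x - y) by ring, abs_neg]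

lemma tent_support {a : ℝ} {n : ℤ} {t : ℝ} (h : tent a n t ≠ 0) :
    0 < t ∧ t < (2:ℝ) ^ (-(n-1)) := by
  rw [tent_eq] at h
  constructor
  · by_contra hle; push_neg at hle
    exact h (by rw [max_eq_left (le_trans (min_le_left _ _) hle), mul_zero])
  · by_contra hle; push_neg at hle
    exact h (by rw [max_eq_left (by linarith [min_le_right t ((2:ℝ) ^ (-(n-1)) - t)]), mul_zero])

lemma tent_up {a : ℝ} {n : ℤ} {t : ℝ} (ht0 : 0 ≤ t) (ht1 : t ≤ (2:ℝ) ^ (-n)) :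
    tent a n t = a * t := by
  unfold tent
  rw [if_pos (Set.mem_Icc.mpr ⟨ht0, ht1⟩)]

lemma tentNK_mem {M : ℝ → ℝ} {p : ℝ} {n k : ℤ} {x : ℝ}
    (h : tentNK M p n k x ≠ 0) :
    k ∈ Finset.Icc (⌊x * 2 ^ (n+1:ℤ)⌋ - 2) (⌊x * 2 ^ (n+1:ℤ)⌋ + 1) := by
  obtain ⟨h1, h2⟩ := tent_support h
  have hpow : (0:ℝ) < 2 ^ (n+1:ℤ) := zpow_pos two_pos _
  have hc : (2:ℝ) ^ (-(n-1)) = 4 / 2 ^ (n+1:ℤ) := by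
    rw [eq_div_iff hpow.ne', ← zpow_add₀ (two_ne_zero : (2:ℝ) ≠ 0)]
    norm_num
    rw [show 1 - n + (n + 1) = 2 by ring]
    norm_num
  rw [hc] at h2
  have hk1 : (k:ℝ) - 1 < x * 2 ^ (n+1:ℤ) := by
    have h1' := sub_pos.mp h1
    rw [div_lt_iff₀ hpow] at h1'
    linarith
  have hk2 : x * 2 ^ (n+1:ℤ) < (k:ℝ) + 3 := by
    have h2' : x < ((k:ℝ) + 3) / 2 ^ (n+1:ℤ) := by
      rw [show ((k:ℝ) + 3) = 4 + ((k:ℝ) - 1) by ring, add_div]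
      linarith
    rw [lt_div_iff₀ hpow] at h2'
    linarith
  have hfl1 : k - 1 ≤ ⌊x * 2 ^ (n+1:ℤ)⌋ := Int.le_floor.mpr (by push_cast; linarith)
  have hfl2 : ⌊x * 2 ^ (n+1:ℤ)⌋ < k + 3 := by
    have := Int.floor_le (x * 2 ^ (n+1:ℤ))
    have : (⌊x * 2 ^ (n+1:ℤ)⌋ : ℝ) < (k:ℝ) + 3 := by linarith
    exact_mod_cast this
  rw [Finset.mem_Icc]; omega

/-- For an Orlicz function `M` with `M 1 = 1` satisfying
`M(λt) ≥ C M(λ) t^q` for all `λ > 0`, `t ∈ (0,1]`, with `1 ≤ q < p`, there is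
`A ≥ 1` such that for all `s, t`:
`M(|s-t|) ≤ ∑_{n,k ∈ ℤ} |f_{n,k}(s) - f_{n,k}(t)|^p ≤ A M(|s-t|)`. -/
theorem stmt_12 (M : ℝ → ℝ)
    (hc : ContinuousOn M (Set.Ici 0))
    (hmono : MonotoneOn M (Set.Ici 0))
    (hconv : ConvexOn ℝ (Set.Ici 0) M)
    (h0 : M 0 = 0)
    (h1 : M 1 = 1)
    (hinf : Tendsto M atTop atTop)
    (hnondeg : ∀ t : ℝ, 0 < t → 0 < M t)
    (p q : ℝ) (hq : 1 ≤ q) (hqp : q < p)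
    (C : ℝ) (hC0 : 0 < C) (hC1 : C ≤ 1)
    (hhom : ∀ l : ℝ, 0 < l → ∀ t ∈ Set.Ioc (0:ℝ) 1, C * (M l * t ^ q) ≤ M (l * t)) :
    ∃ A : ℝ, 1 ≤ A ∧ ∀ s t : ℝ,
      M |s - t| ≤ (∑' nk : ℤ × ℤ, |tentNK M p nk.1 nk.2 s - tentNK M p nk.1 nk.2 t| ^ p) ∧
      (∑' nk : ℤ × ℤ, |tentNK M p nk.1 nk.2 s - tentNK M p nk.1 nk.2 t| ^ p) ≤ A * M |s - t| := by
  have hp0 : 0 < p := lt_of_lt_of_le one_pos (le_of_lt (lt_of_le_of_lt hq hqp))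
  have hpq : 0 < p - q := by linarith
  -- constants
  set r : ℝ := (2:ℝ) ^ (q - p) with hrdef
  have hr0 : 0 < r := Real.rpow_pos_of_pos two_pos _
  have hr1 : r < 1 := Real.rpow_lt_one_of_one_lt_of_neg one_lt_two (by linarith)
  set ρ : ℝ := max (1/2) r with hρdef
  have hρ0 : (0:ℝ) < ρ := lt_max_of_lt_left one_half_pos
  have hρ1 : ρ < 1 := max_lt (by norm_num) hr1
  have hgeo : Summable (fun j : ℤ => ρ ^ j.natAbs) := by
    apply Summable.of_nat_of_neg <;>
      · simpa using summable_geometric_of_lt_one hρ0.le hρ1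
  set S : ℝ := ∑' j : ℤ, ρ ^ j.natAbs with hSdef
  have hS0 : 0 ≤ S := tsum_nonneg fun j => pow_nonneg hρ0.le _
  set K : ℝ := max ((2:ℝ) ^ (2*p)) (C⁻¹ * (2:ℝ) ^ (2*p - q)) with hKdef
  have hK0 : (0:ℝ) < K := lt_max_of_lt_left (Real.rpow_pos_of_pos (by norm_num) _)
  refine ⟨max 1 (8 * K * S), le_max_left _ _, fun s t => ?_⟩
  -- generic facts
  have hMl : ∀ n : ℤ, 0 < M ((2:ℝ) ^ (-(n + 1))) := fun n => hnondeg _ (zpow_pos two_pos _)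
  have hA : ∀ n : ℤ, 0 < tentCoeff M p n := fun n =>
    mul_pos (zpow_pos two_pos _) (Real.rpow_pos_of_pos (hMl n) _)
  have hrp : ∀ a b : ℝ, (2:ℝ) ^ a * (2:ℝ) ^ b = (2:ℝ) ^ (a + b) := fun a b =>
    (Real.rpow_add two_pos a b).symm
  have hzr : ∀ j : ℤ, (2:ℝ) ^ j = (2:ℝ) ^ (j:ℝ) := fun j => (Real.rpow_intCast 2 j).symm
  have hzrp : ∀ (j : ℤ) (y : ℝ), ((2:ℝ) ^ j) ^ y = (2:ℝ) ^ ((j:ℝ) * y) := fun j y => by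
    rw [hzr j, ← Real.rpow_mul (by norm_num : (0:ℝ) ≤ 2)]
  have key : ∀ n : ℤ, ∀ x : ℝ, 0 ≤ x →
      (tentCoeff M p n * x) ^ p
        = (2:ℝ) ^ (((n:ℝ) + 2) * p) * (M ((2:ℝ) ^ (-(n + 1))) * x ^ p) := by
    intro n x hx
    unfold tentCoeff
    rw [mul_assoc,
      Real.mul_rpow (zpow_pos two_pos _).le (mul_nonneg (Real.rpow_nonneg (hMl n).le _) hx),
      Real.mul_rpow (Real.rpow_nonneg (hMl n).le _) hx,
      ← Real.rpow_mul (hMl n).le, one_div, inv_mul_cancel₀ hp0.ne', Real.rpow_one]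
    congr 1
    rw [hzrp]
    congr 1
    push_cast
    ring
  by_cases hst : s = t
  · subst hst
    simp [sub_self, abs_zero, h0, Real.zero_rpow hp0.ne', tsum_zero]
  -- main case
  have hd : 0 < |s - t| := abs_pos.mpr (sub_ne_zero.mpr hst)
  set d : ℝ := |s - t| with hddef
  have hMd : 0 < M d := hnondeg d hd
  set m : ℤ := -(Int.log 2 d + 1) with hmdef
  have hd1 : (2:ℝ) ^ (-(m + 1)) ≤ d := by
    have := Int.zpow_log_le_self (R := ℝ) (b := 2) one_lt_two hd
    simpa [hmdef] using this
  have hd2 : d ≤ (2:ℝ) ^ (-m) := by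
    have := (Int.lt_zpow_succ_log_self (R := ℝ) (b := 2) one_lt_two d).le
    simpa [hmdef] using this
  set F : ℤ × ℤ → ℝ := fun nk => |tentNK M p nk.1 nk.2 s - tentNK M p nk.1 nk.2 t| ^ p
    with hFdef
  have hF0 : ∀ nk, 0 ≤ F nk := fun nk => Real.rpow_nonneg (abs_nonneg _) _
  set B : ℤ → ℝ := fun n => K * M d * ρ ^ (n - m).natAbs with hBdef
  have hB0 : ∀ n, 0 ≤ B n := fun n =>
    mul_nonneg (mul_nonneg hK0.le hMd.le) (pow_nonneg hρ0.le _)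
  have hFB : ∀ n k : ℤ, F (n, k) ≤ B n := by
    intro n k
    have habs_height : |tentNK M p n k s - tentNK M p n k t| ≤ tentCoeff M p n * 2 ^ (-n:ℤ) := by
      have b1 : 0 ≤ tentNK M p n k s := tent_nonneg (hA n).le _ _
      have b2 : tentNK M p n k s ≤ tentCoeff M p n * 2 ^ (-n:ℤ) := tent_le (hA n).le _ _
      have b3 : 0 ≤ tentNK M p n k t := tent_nonneg (hA n).le _ _
      have b4 : tentNK M p n k t ≤ tentCoeff M p n * 2 ^ (-n:ℤ) := tent_le (hA n).le _ _
      rw [abs_sub_le_iff]; constructor <;> linarith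
    have habs_lip : |tentNK M p n k s - tentNK M p n k t| ≤ tentCoeff M p n * d := by
      have := tent_lipschitz (hA n).le n (s - ((k:ℝ) - 1) / (2:ℝ) ^ (n + 1))
        (t - ((k:ℝ) - 1) / (2:ℝ) ^ (n + 1))
      rw [sub_sub_sub_cancel_right] at this
      exact this
    rcases le_or_gt m n with hnm | hnm
    · -- n ≥ m : use the height bound
      have hF1 : F (n, k) ≤ (tentCoeff M p n * 2 ^ (-n:ℤ)) ^ p :=
        Real.rpow_le_rpow (abs_nonneg _) habs_height hp0.le
      have hcalc : (tentCoeff M p n * 2 ^ (-n:ℤ)) ^ p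
          = (2:ℝ) ^ (2*p) * M ((2:ℝ) ^ (-(n + 1))) := by
        rw [key n _ (zpow_pos two_pos _).le, hzrp, mul_comm (M _), ← mul_assoc, hrp]
        congr 2
        push_cast; ring
      -- convexity : M l ≤ 2^{m-n} M d
      have hln : (2:ℝ) ^ (-(n+1)) ≤ (2:ℝ) ^ (-(m+1)) :=
        zpow_le_zpow_right₀ one_le_two (by omega)
      set t₀ : ℝ := (2:ℝ) ^ (-(n+1)) / d with ht₀def
      have ht₀0 : 0 < t₀ := div_pos (zpow_pos two_pos _) hd
      have ht₀1 : t₀ ≤ 1 := (div_le_one hd).mpr (hln.trans hd1)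
      have hconv2 := hconv.2 (Set.mem_Ici.mpr hd.le) (Set.self_mem_Ici)
        ht₀0.le (by linarith : (0:ℝ) ≤ 1 - t₀) (by ring)
      simp only [smul_eq_mul, mul_zero, add_zero, h0] at hconv2
      rw [div_mul_cancel₀ _ hd.ne'] at hconv2
      have ht₀le : t₀ ≤ (2:ℝ) ^ (m - n : ℤ) := by
        have h1' : t₀ ≤ (2:ℝ) ^ (-(n+1)) / (2:ℝ) ^ (-(m+1)) :=
          div_le_div_of_nonneg_left (zpow_pos two_pos _).le (zpow_pos two_pos _) hd1
        have h2' : (2:ℝ) ^ (-(n+1)) / (2:ℝ) ^ (-(m+1)) = (2:ℝ) ^ (m - n : ℤ) := by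
          rw [← zpow_sub₀ (two_ne_zero : (2:ℝ) ≠ 0)]
          congr 1; ring
        rw [h2'] at h1'; exact h1'
      have hMlle : M ((2:ℝ) ^ (-(n+1))) ≤ (2:ℝ) ^ (m - n : ℤ) * M d :=
        le_trans hconv2 (mul_le_mul_of_nonneg_right ht₀le hMd.le)
      -- 2^{m-n} ≤ ρ^{natAbs (n-m)}
      have hj : ((n - m).natAbs : ℤ) = n - m := Int.natAbs_of_nonneg (by omega)
      have h2mn : (2:ℝ) ^ (m - n : ℤ) ≤ ρ ^ (n - m).natAbs := by
        have he : (2:ℝ) ^ (m - n : ℤ) = (1/2:ℝ) ^ (n - m).natAbs := by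
          rw [one_div, inv_pow, ← zpow_natCast (2:ℝ), hj, ← zpow_neg]
          congr 1; ring
        rw [he]
        exact pow_le_pow_left₀ (by norm_num) (le_max_left _ _) _
      calc F (n, k) ≤ (2:ℝ) ^ (2*p) * M ((2:ℝ) ^ (-(n + 1))) := by rw [← hcalc]; exact hF1
        _ ≤ (2:ℝ) ^ (2*p) * ((2:ℝ) ^ (m - n : ℤ) * M d) :=
            mul_le_mul_of_nonneg_left hMlle (Real.rpow_pos_of_pos two_pos _).le
        _ = ((2:ℝ) ^ (2*p) * (2:ℝ) ^ (m - n : ℤ)) * M d := by ring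
        _ ≤ (K * ρ ^ (n - m).natAbs) * M d := by
            refine mul_le_mul_of_nonneg_right ?_ hMd.le
            exact mul_le_mul (le_max_left _ _) h2mn (zpow_pos two_pos _).le hK0.le
        _ = B n := by rw [hBdef]; ring
    · -- n < m : use the Lipschitz bound
      have hF1 : F (n, k) ≤ (tentCoeff M p n * d) ^ p :=
        Real.rpow_le_rpow (abs_nonneg _) habs_lip hp0.le
      set l : ℝ := (2:ℝ) ^ (-(n+1)) with hldef
      have hl0 : 0 < l := zpow_pos two_pos _
      set t₁ : ℝ := d * (2:ℝ) ^ (n+1:ℤ) with ht₁def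
      have ht₁0 : 0 < t₁ := mul_pos hd (zpow_pos two_pos _)
      have ht₁1 : t₁ ≤ 1 := by
        have hdle : d ≤ (2:ℝ) ^ (-(n+1)) :=
          hd2.trans (zpow_le_zpow_right₀ one_le_two (by omega))
        calc t₁ ≤ (2:ℝ) ^ (-(n+1)) * (2:ℝ) ^ (n+1:ℤ) :=
              mul_le_mul_of_nonneg_right hdle (zpow_pos two_pos _).le
          _ = 1 := by
              rw [← zpow_add₀ (two_ne_zero : (2:ℝ) ≠ 0),
                show -(n+1) + (n+1) = (0:ℤ) by ring, zpow_zero]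
      have hhom1 := hhom l hl0 t₁ ⟨ht₁0, ht₁1⟩
      have hlt : l * t₁ = d := by
        rw [hldef, ht₁def]
        rw [show (2:ℝ) ^ (-(n+1)) * (d * (2:ℝ) ^ (n+1:ℤ))
            = d * ((2:ℝ) ^ (-(n+1)) * (2:ℝ) ^ (n+1:ℤ)) by ring,
          ← zpow_add₀ (two_ne_zero : (2:ℝ) ≠ 0),
          show -(n+1) + (n+1) = (0:ℤ) by ring, zpow_zero, mul_one]
      rw [hlt] at hhom1
      have ht₁q : 0 < t₁ ^ q := Real.rpow_pos_of_pos ht₁0 _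
      have hMll : M l ≤ C⁻¹ * M d / t₁ ^ q := by
        rw [le_div_iff₀ ht₁q]
        exact (le_inv_mul_iff₀ hC0).mpr hhom1
      have ht1q_eq : t₁ ^ q = d ^ q * (2:ℝ) ^ (((n:ℝ) + 1) * q) := by
        rw [ht₁def, Real.mul_rpow hd.le (zpow_pos two_pos _).le, hzrp]
        congr 2
        push_cast; ring
      have hj : (((n - m).natAbs : ℝ)) = (m:ℝ) - n := by
        rw [Nat.cast_natAbs, abs_sub_comm, abs_of_nonneg (by omega : (0:ℤ) ≤ m - n)]
        push_cast; ring
      have h2pos : ∀ x : ℝ, (0:ℝ) < 2 ^ x := fun x => Real.rpow_pos_of_pos two_pos x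
      calc F (n, k) ≤ (tentCoeff M p n * d) ^ p := hF1
        _ = (2:ℝ) ^ (((n:ℝ)+2)*p) * (M l * d ^ p) := key n d hd.le
        _ ≤ (2:ℝ) ^ (((n:ℝ)+2)*p) * ((C⁻¹ * M d / t₁ ^ q) * d ^ p) :=
            mul_le_mul_of_nonneg_left
              (mul_le_mul_of_nonneg_right hMll (Real.rpow_nonneg hd.le p))
              (h2pos _).le
        _ = (C⁻¹ * M d) * ((2:ℝ) ^ (((n:ℝ)+2)*p)
              * (d ^ (p - q) * (2:ℝ) ^ (-(((n:ℝ)+1)*q)))) := by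
            rw [ht1q_eq, Real.rpow_sub hd, Real.rpow_neg (by norm_num : (0:ℝ) ≤ 2)]
            have hdq : (0:ℝ) < d ^ q := Real.rpow_pos_of_pos hd _
            field_simp
        _ ≤ (C⁻¹ * M d) * ((2:ℝ) ^ (((n:ℝ)+2)*p)
              * ((2:ℝ) ^ ((-(m:ℝ))*(p-q)) * (2:ℝ) ^ (-(((n:ℝ)+1)*q)))) := by
            have hdpq : d ^ (p - q) ≤ (2:ℝ) ^ ((-(m:ℝ))*(p-q)) := by
              have h1' : d ^ (p - q) ≤ ((2:ℝ) ^ (-m:ℤ)) ^ (p - q) :=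
                Real.rpow_le_rpow hd.le hd2 hpq.le
              rw [hzrp] at h1'
              have hcst : ((-m:ℤ):ℝ) * (p-q) = (-(m:ℝ))*(p-q) := by push_cast; ring
              rw [hcst] at h1'
              exact h1'
            refine mul_le_mul_of_nonneg_left (mul_le_mul_of_nonneg_left
              (mul_le_mul_of_nonneg_right hdpq (h2pos _).le) (h2pos _).le)
              (mul_nonneg (inv_nonneg.mpr hC0.le) hMd.le)
        _ = (C⁻¹ * (2:ℝ) ^ (2*p - q)) * M d * ((2:ℝ) ^ (q - p)) ^ (n - m).natAbs := by
            rw [← Real.rpow_natCast ((2:ℝ) ^ (q-p)) ((n-m).natAbs),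
              ← Real.rpow_mul (by norm_num : (0:ℝ) ≤ 2), hj, hrp, hrp]
            have hEE : (2:ℝ) ^ (((n:ℝ)+2)*p + ((-(m:ℝ))*(p-q) + -(((n:ℝ)+1)*q)))
                = (2:ℝ) ^ (2*p - q) * (2:ℝ) ^ ((q-p)*((m:ℝ)-(n:ℝ))) := by
              rw [hrp]; congr 1; ring
            rw [hEE]; ring
        _ ≤ K * M d * ρ ^ (n - m).natAbs := by
            refine mul_le_mul (mul_le_mul_of_nonneg_right (le_max_right _ _) hMd.le)
              (pow_le_pow_left₀ hr0.le (le_max_right _ _) _)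
              (pow_nonneg hr0.le _) (mul_nonneg hK0.le hMd.le)
        _ = B n := by rw [hBdef]
  set Sn : ℤ → Finset ℤ := fun n =>
    Finset.Icc (⌊s * 2 ^ (n+1:ℤ)⌋ - 2) (⌊s * 2 ^ (n+1:ℤ)⌋ + 1) ∪
    Finset.Icc (⌊t * 2 ^ (n+1:ℤ)⌋ - 2) (⌊t * 2 ^ (n+1:ℤ)⌋ + 1) with hSndef
  have hsupport : ∀ n k : ℤ, F (n, k) ≠ 0 → k ∈ Sn n := by
    intro n k hFne
    have hne : tentNK M p n k s ≠ tentNK M p n k t := by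
      intro he
      apply hFne
      simp [hFdef, he, sub_self, abs_zero, Real.zero_rpow hp0.ne']
    rcases ne_or_eq (tentNK M p n k s) 0 with hs' | hs'
    · exact Finset.mem_union_left _ (tentNK_mem hs')
    · have ht' : tentNK M p n k t ≠ 0 := fun h => hne (hs'.trans h.symm)
      exact Finset.mem_union_right _ (tentNK_mem ht')
  have hcard : ∀ n : ℤ, (Sn n).card ≤ 8 := by
    intro n
    refine (Finset.card_union_le _ _).trans ?_
    rw [Int.card_Icc, Int.card_Icc]
    omega
  set g : ℤ × ℤ → ℝ := fun nk => if nk.2 ∈ Sn nk.1 then B nk.1 else 0 with hgdef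
  have hg0 : ∀ nk, 0 ≤ g nk := by
    intro nk; simp only [hgdef]; split_ifs; exacts [hB0 _, le_rfl]
  have hFg : ∀ nk, F nk ≤ g nk := by
    rintro ⟨n, k⟩
    by_cases hk : k ∈ Sn n
    · simpa [hgdef, hk] using hFB n k
    · have hz : F (n, k) = 0 := by
        by_contra h; exact hk (hsupport n k h)
      simp [hgdef, hk, hz]
  have hrow : ∀ n, Summable (fun k => g (n, k)) := fun n =>
    summable_of_ne_finset_zero (s := Sn n) (fun k hk => if_neg hk)
  have hrowsum : ∀ n, ∑' k, g (n, k) ≤ 8 * B n := by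
    intro n
    rw [tsum_eq_sum (s := Sn n) (fun k hk => if_neg hk)]
    calc ∑ k ∈ Sn n, g (n, k) ≤ ∑ _k ∈ Sn n, B n := by
          refine Finset.sum_le_sum fun k hk => ?_
          simp [hgdef, hk]
      _ = (Sn n).card * B n := by rw [Finset.sum_const, nsmul_eq_mul]
      _ ≤ 8 * B n := by
          refine mul_le_mul_of_nonneg_right ?_ (hB0 n)
          exact_mod_cast hcard n
  have hBsum : Summable B := by
    have h := (hgeo.mul_left (K * M d)).comp_injective (Equiv.subRight m).injective
    exact h
  have hrowsummable : Summable (fun n => ∑' k, g (n, k)) := by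
    refine Summable.of_nonneg_of_le (fun n => tsum_nonneg fun k => hg0 (n, k)) hrowsum
      (hBsum.mul_left 8)
  have hgsum : Summable g := (summable_prod_of_nonneg hg0).mpr ⟨hrow, hrowsummable⟩
  have hFsum : Summable F := Summable.of_nonneg_of_le hF0 hFg hgsum
  constructor
  · -- lower bound
    have h2pos : ∀ x : ℝ, (0:ℝ) < 2 ^ x := fun x => Real.rpow_pos_of_pos two_pos x
    set u : ℝ := min s t with hudef
    set v : ℝ := max s t with hvdef
    have huv : v - u = d := by
      rw [hddef, abs_sub_comm]; exact max_sub_min_eq_abs s t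
    set n₀ : ℤ := m - 1 with hn₀def
    set j₀ : ℤ := ⌊u * 2 ^ (m:ℤ)⌋ with hj₀def
    set k₀ : ℤ := j₀ + 1 with hk₀def
    have hm0 : (0:ℝ) < 2 ^ (m:ℤ) := zpow_pos two_pos _
    set e : ℝ := (2:ℝ) ^ (-m:ℤ) with hedef
    have he0 : 0 < e := zpow_pos two_pos _
    have he : e * 2 ^ (m:ℤ) = 1 := by
      rw [hedef, ← zpow_add₀ (two_ne_zero : (2:ℝ) ≠ 0),
        show -m + m = (0:ℤ) by ring, zpow_zero]
    set c : ℝ := (j₀:ℝ) * e with hcdef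
    have hshift : ((k₀:ℝ) - 1) / (2:ℝ) ^ (n₀ + 1) = c := by
      rw [show n₀ + 1 = m by omega, hcdef, hedef, hk₀def]
      push_cast
      rw [div_eq_mul_inv, ← zpow_neg]
      ring
    have hfl1 : (j₀:ℝ) ≤ u * 2 ^ (m:ℤ) := Int.floor_le _
    have hfl2 : u * 2 ^ (m:ℤ) < (j₀:ℝ) + 1 := Int.lt_floor_add_one _
    have hue : u * 2 ^ (m:ℤ) * e = u := by
      rw [mul_assoc, mul_comm ((2:ℝ) ^ (m:ℤ)) e, he, mul_one]
    have hcu : c ≤ u := by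
      have h := mul_le_mul_of_nonneg_right hfl1 he0.le
      rw [hcdef]
      linarith [hue]
    have huc : u < c + e := by
      have h := mul_lt_mul_of_pos_right hfl2 he0
      rw [hcdef]
      rw [add_mul, one_mul] at h
      linarith [hue]
    have h2n₀ : (2:ℝ) ^ (-n₀) = 2 * e := by
      rw [hedef, show -n₀ = 1 + -m by omega, zpow_add₀ (two_ne_zero : (2:ℝ) ≠ 0), zpow_one]
    have hde : d ≤ e := hd2
    have husv : u ≤ s ∧ s ≤ v ∧ u ≤ t ∧ t ≤ v :=
      ⟨min_le_left s t, le_max_left s t, min_le_right s t, le_max_right s t⟩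
    have hval : ∀ x : ℝ, 0 ≤ x - c → x - c ≤ (2:ℝ) ^ (-n₀) →
        tentNK M p n₀ k₀ x = tentCoeff M p n₀ * (x - c) := by
      intro x hx1 hx2
      show tent _ n₀ (x - ((k₀:ℝ) - 1) / (2:ℝ) ^ (n₀ + 1)) = _
      rw [hshift]
      exact tent_up hx1 hx2
    have hsc1 : 0 ≤ s - c := by linarith [husv.1]
    have hsc2 : s - c ≤ (2:ℝ) ^ (-n₀) := by
      rw [h2n₀]; linarith [husv.2.1, huv]
    have htc1 : 0 ≤ t - c := by linarith [husv.2.2.1]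
    have htc2 : t - c ≤ (2:ℝ) ^ (-n₀) := by
      rw [h2n₀]; linarith [husv.2.2.2, huv]
    have hFval : F (n₀, k₀) = (tentCoeff M p n₀ * d) ^ p := by
      simp only [hFdef]
      rw [hval s hsc1 hsc2, hval t htc1 htc2, ← mul_sub, abs_mul,
        abs_of_nonneg (hA n₀).le, show s - c - (t - c) = s - t by ring, ← hddef]
    have hn₀R : ((n₀:ℝ)) = (m:ℝ) - 1 := by rw [hn₀def]; push_cast; ring
    have hone : (1:ℝ) ≤ (2:ℝ) ^ (((n₀:ℝ) + 2) * p) * d ^ p := by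
      have h1' : (1:ℝ) ≤ (2:ℝ) ^ (m + 1 : ℤ) * d := by
        have h := mul_le_mul_of_nonneg_left hd1 (zpow_pos two_pos (m + 1 : ℤ)).le
        rw [← zpow_add₀ (two_ne_zero : (2:ℝ) ≠ 0),
          show m + 1 + -(m+1) = (0:ℤ) by ring, zpow_zero] at h
        exact h
      calc (1:ℝ) = 1 ^ p := (Real.one_rpow p).symm
        _ ≤ ((2:ℝ) ^ (m + 1 : ℤ) * d) ^ p := Real.rpow_le_rpow zero_le_one h1' hp0.le
        _ = (2:ℝ) ^ (((n₀:ℝ) + 2) * p) * d ^ p := by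
            rw [Real.mul_rpow (zpow_pos two_pos _).le hd.le, hzrp]
            congr 2
            rw [hn₀R]; push_cast; ring
    have hMdm : M d ≤ M ((2:ℝ) ^ (-(n₀ + 1))) := by
      rw [show -(n₀ + 1) = -m by omega]
      exact hmono (Set.mem_Ici.mpr hd.le) (Set.mem_Ici.mpr (zpow_pos two_pos _).le) hd2
    have hlow : M d ≤ F (n₀, k₀) := by
      rw [hFval, key n₀ d hd.le]
      calc M d = 1 * M d := (one_mul _).symm
        _ ≤ ((2:ℝ) ^ (((n₀:ℝ) + 2) * p) * d ^ p) * M ((2:ℝ) ^ (-(n₀ + 1))) :=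
            mul_le_mul hone hMdm hMd.le
              (mul_nonneg (h2pos _).le (Real.rpow_nonneg hd.le _))
        _ = (2:ℝ) ^ (((n₀:ℝ) + 2) * p) * (M ((2:ℝ) ^ (-(n₀ + 1))) * d ^ p) := by ring
    exact le_trans hlow (Summable.le_tsum hFsum (n₀, k₀) fun j _ => hF0 j)
  · -- upper bound
    calc ∑' nk, F nk ≤ ∑' nk, g nk := Summable.tsum_le_tsum hFg hFsum hgsum
      _ = ∑' n, ∑' k, g (n, k) := Summable.tsum_prod' hgsum hrow
      _ ≤ ∑' n, 8 * B n := Summable.tsum_le_tsum hrowsum hrowsummable (hBsum.mul_left 8)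
      _ = 8 * ∑' n, B n := tsum_mul_left
      _ = 8 * (K * M d * S) := by
          congr 1
          have := (Equiv.subRight m).tsum_eq (fun j : ℤ => K * M d * ρ ^ j.natAbs)
          simp only [Equiv.subRight_apply] at this
          rw [hBdef]
          simp only []
          rw [this]  -- maybe wrong direction
          rw [hSdef, tsum_mul_left]
      _ ≤ max 1 (8 * K * S) * M d := by
          have h8 : 8 * K * S ≤ max 1 (8 * K * S) := le_max_right _ _
          calc 8 * (K * M d * S) = (8 * K * S) * M d := by ring
            _ ≤ max 1 (8 * K * S) * M d := mul_le_mul_of_nonneg_right h8 hMd.le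
end
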